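/- For fixed γ ∈ (0,1), the Avalanche expected delay, as a function of the threshold β, grows at least proportionally to (1-γ)^{-β}; concretely, D(β) = β + (1 + (2+βγ)(1-γ)^β - (1-γ)^{2β}(1+βγ)) / (γ(1-γ)^β(1-(1-γ)^β)) satisfies D(β) ≥ (1-γ)^{-β} · c for some constant c > 0 depending only on γ, for all sufficiently large β. -/

import Mathlib

/-- For fixed γ ∈ (0,1), the Avalanche expected delay grows at least like (1-γ)^{-β}:
there is a constant c > 0 such that D(β) ≥ (1-γ)^{-β} · c for all sufficiently large β. -/
theorem stmt_7 (γ : ℝ) (hγ : γ ∈ Set.Ioo (0 : ℝ) 1) :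
    ∃ c > (0 : ℝ), ∃ N : ℕ, ∀ β : ℕ, N ≤ β → 1 ≤ β →
      (β : ℝ) + (1 + (2 + (β : ℝ) * γ) * (1 - γ) ^ β
          - (1 - γ) ^ (2 * β) * (1 + (β : ℝ) * γ))
        / (γ * (1 - γ) ^ β * (1 - (1 - γ) ^ β))
      ≥ ((1 - γ) ^ β)⁻¹ * c := by
  obtain ⟨hγ0, hγ1⟩ := hγ
  have h1γ0 : (0:ℝ) < 1 - γ := by linarith
  refine ⟨1/(2*γ), by positivity, ?_⟩
  have hr0 : (0:ℝ) ≤ (1-γ)^2 := sq_nonneg _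
  have hr1 : (1-γ)^2 < 1 := by nlinarith
  have htend : Filter.Tendsto
      (fun n : ℕ => (n : ℝ) * ((1-γ)^2) ^ n) Filter.atTop (nhds 0) :=
    tendsto_self_mul_const_pow_of_lt_one hr0 hr1
  have htend2 : Filter.Tendsto
      (fun n : ℕ => ((1-γ)^2) ^ n) Filter.atTop (nhds 0) :=
    tendsto_pow_atTop_nhds_zero_of_lt_one hr0 hr1
  have hcomb : Filter.Tendsto
      (fun n : ℕ => ((1-γ)^2) ^ n * (1 + (n:ℝ) * γ)) Filter.atTop (nhds 0) := by
    have := htend2.add ((htend.const_mul γ))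
    simp only [add_zero, mul_zero] at this
    convert this using 2 with n
    ring
  have hev : ∀ᶠ n : ℕ in Filter.atTop,
      ((1-γ)^2) ^ n * (1 + (n:ℝ) * γ) ≤ 1/2 :=
    hcomb.eventually_le_const (by norm_num)
  obtain ⟨N, hN⟩ := Filter.eventually_atTop.mp hev
  refine ⟨N, fun β hβN hβ1 => ?_⟩
  set x : ℝ := (1 - γ) ^ β with hx
  have hx0 : 0 < x := pow_pos h1γ0 β
  have hx1 : x < 1 := pow_lt_one₀ h1γ0.le (by linarith) (by omega)
  have hx2 : (1 - γ) ^ (2 * β) = x ^ 2 := by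
    rw [mul_comm, pow_mul]
  have hsq : x ^ 2 * (1 + (β:ℝ) * γ) ≤ 1/2 := by
    have := hN β hβN
    rwa [← pow_mul, mul_comm 2 β, pow_mul] at this
  have hβγ : (0:ℝ) ≤ (β:ℝ) * γ := by positivity
  have key : (1/(2*γ)) / x
      ≤ (1 + (2 + (β:ℝ)*γ) * x - x^2 * (1 + (β:ℝ)*γ)) / (γ * x * (1 - x)) := by
    rw [div_le_div_iff₀ hx0 (mul_pos (mul_pos hγ0 hx0) (sub_pos.mpr hx1))]
    have hc : 1/(2*γ) * γ = 1/2 := by field_simp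
    nlinarith [mul_pos hx0 (sub_pos.mpr hx1), mul_nonneg hβγ hx0.le,
      mul_nonneg (mul_nonneg hβγ hx0.le) hx0.le]
  rw [hx2]
  have hβ0 : (0:ℝ) ≤ (β:ℝ) := Nat.cast_nonneg β
  calc x⁻¹ * (1/(2*γ)) = (1/(2*γ)) / x := by rw [inv_mul_eq_div]
    _ ≤ (1 + (2 + (β:ℝ)*γ) * x - x^2 * (1 + (β:ℝ)*γ)) / (γ * x * (1 - x)) := key
    _ ≤ (β:ℝ) + (1 + (2 + (β:ℝ)*γ) * x - x^2 * (1 + (β:ℝ)*γ)) / (γ * x * (1 - x)) := by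
        linarith
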